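/- Let N ∈ ℕ and m₁, …, m_N > 0. Suppose V₁, …, V_N : [0,∞) → ℝ^d are locally absolutely continuous and for almost every t ≥ 0 there exist coefficients a_{ij}(t) ∈ [0,1] (for j ≠ i) such that V_i'(t) = Σ_{j≠i} a_{ij}(t) m_j (V_j(t) − V_i(t)) for every i. Then the maximal speed is nonincreasing: max_{1≤i≤N} |V_i(t)| ≤ max_{1≤i≤N} |V_i(0)| for all t ≥ 0. -/

import Mathlib

open MeasureTheory Metric Set
noncomputable section

abbrev E (d : ℕ) : Type := EuclideanSpace ℝ (Fin d)

lemma exp_setIntegral (K a b : ℝ) (hab : a ≤ b) :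
    ∫ s in Ioc a b, K * Real.exp (K * s) = Real.exp (K * b) - Real.exp (K * a) := by
  rw [← intervalIntegral.integral_of_le hab]
  have hd : ∀ s ∈ uIcc a b, HasDerivAt (fun s => Real.exp (K * s)) (K * Real.exp (K * s)) s := by
    intro s _
    simpa [mul_comm] using ((hasDerivAt_id s).const_mul K).exp
  exact intervalIntegral.integral_eq_sub_of_hasDerivAt (fun s hs => hd s hs)
    ((by continuity : Continuous fun s => K * Real.exp (K * s)).intervalIntegrable _ _)

lemma smul_exp_integrableOn {d : ℕ} (K x : ℝ) (g : ℝ → E d)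
    (hg : IntegrableOn g (Ioc 0 x)) :
    IntegrableOn (fun s => Real.exp (K * s) • g s) (Ioc 0 x) := by
  refine Integrable.mono' (hg.norm.const_mul (Real.exp (|K| * x))) ?_ ?_
  · exact ((Real.continuous_exp.comp (continuous_const.mul continuous_id)).aestronglyMeasurable).smul hg.1
  · filter_upwards [ae_restrict_mem measurableSet_Ioc] with s hs
    rw [norm_smul, Real.norm_eq_abs, abs_of_pos (Real.exp_pos _)]
    have h1 : K * s ≤ |K| * x := by
      refine le_trans (le_abs_self _) ?_
      rw [abs_mul]
      exact mul_le_mul le_rfl (by rw [abs_of_nonneg hs.1.le]; exact hs.2) (abs_nonneg s) (abs_nonneg K)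
    exact mul_le_mul_of_nonneg_right (Real.exp_le_exp.2 h1) (norm_nonneg _)

lemma parts_lemma {d : ℕ} (K t : ℝ) (ht : 0 ≤ t) (g : ℝ → E d)
    (hg : IntegrableOn g (Ioc 0 t)) :
    ∫ s in Ioc (0:ℝ) t, (K * Real.exp (K * s)) • (∫ u in Ioc (0:ℝ) s, g u) =
      Real.exp (K * t) • (∫ u in Ioc (0:ℝ) t, g u)
        - ∫ u in Ioc (0:ℝ) t, Real.exp (K * u) • g u := by
  set μ := volume.restrict (Ioc (0:ℝ) t) with hμ
  set F : ℝ × ℝ → E d :=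
    ({p : ℝ × ℝ | p.2 ≤ p.1}).indicator (fun p => (K * Real.exp (K * p.1)) • g p.2) with hF
  have hmeasset : MeasurableSet {p : ℝ × ℝ | p.2 ≤ p.1} :=
    measurableSet_le measurable_snd measurable_fst
  have hbase : Integrable (fun p : ℝ × ℝ => (K * Real.exp (K * p.1)) • g p.2) (μ.prod μ) := by
    have h0 : IntegrableOn (fun s : ℝ => K * Real.exp (K * s)) (Icc 0 t) volume :=
      (by continuity : Continuous fun s : ℝ => K * Real.exp (K * s)).integrableOn_Icc
    have h1 : Integrable (fun s : ℝ => K * Real.exp (K * s)) μ :=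
      h0.mono_set Ioc_subset_Icc_self
    exact h1.smul_prod (hg : Integrable g μ)
  have hFint : Integrable F (μ.prod μ) := hbase.indicator hmeasset
  -- inner integral evaluation, left grouping
  have hL : ∀ s ∈ Ioc (0:ℝ) t,
      (∫ u, F (s, u) ∂μ) = (K * Real.exp (K * s)) • (∫ u in Ioc (0:ℝ) s, g u) := by
    intro s hs
    have h1 : (fun u => F (s, u)) = (Iic s).indicator (fun u => (K * Real.exp (K * s)) • g u) := by
      ext u
      simp only [hF, Set.indicator_apply, mem_setOf_eq, mem_Iic]
    rw [h1, hμ, setIntegral_indicator measurableSet_Iic]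
    have h2 : Ioc (0:ℝ) t ∩ Iic s = Ioc 0 s := by
      ext u; simp only [mem_inter_iff, mem_Ioc, mem_Iic]
      constructor
      · rintro ⟨⟨h3, _⟩, h5⟩; exact ⟨h3, h5⟩
      · rintro ⟨h3, h4⟩; exact ⟨⟨h3, h4.trans hs.2⟩, h4⟩
    rw [h2, integral_smul]
  -- inner integral evaluation, right grouping
  have hR : ∀ u ∈ Ioc (0:ℝ) t,
      (∫ s, F (s, u) ∂μ) = (Real.exp (K * t) - Real.exp (K * u)) • g u := by
    intro u hu
    have h1 : (fun s => F (s, u)) = (Ici u).indicator (fun s => (K * Real.exp (K * s)) • g u) := by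
      ext s
      simp only [hF, Set.indicator_apply, mem_setOf_eq, mem_Ici]
    rw [h1, hμ, setIntegral_indicator measurableSet_Ici]
    have h2 : Ioc (0:ℝ) t ∩ Ici u = Icc u t := by
      ext s; simp only [mem_inter_iff, mem_Ioc, mem_Ici, mem_Icc]
      constructor
      · rintro ⟨⟨_, h4⟩, h5⟩; exact ⟨h5, h4⟩
      · rintro ⟨h3, h4⟩; exact ⟨⟨lt_of_lt_of_le hu.1 h3, h4⟩, h3⟩
    rw [h2, integral_Icc_eq_integral_Ioc, integral_smul_const,
      exp_setIntegral K u t hu.2]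
  -- Fubini
  have swap : (∫ s, ∫ u, F (s, u) ∂μ ∂μ) = ∫ u, ∫ s, F (s, u) ∂μ ∂μ :=
    integral_integral_swap (by exact hFint)
  calc ∫ s in Ioc (0:ℝ) t, (K * Real.exp (K * s)) • (∫ u in Ioc (0:ℝ) s, g u)
      = ∫ s, ∫ u, F (s, u) ∂μ ∂μ := by
        rw [hμ]
        exact (setIntegral_congr_fun measurableSet_Ioc (fun s hs => (hL s hs).symm))
    _ = ∫ u, ∫ s, F (s, u) ∂μ ∂μ := swap
    _ = ∫ u in Ioc (0:ℝ) t, (Real.exp (K * t) - Real.exp (K * u)) • g u := by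
        rw [hμ]
        exact (setIntegral_congr_fun measurableSet_Ioc (fun u hu => hR u hu))
    _ = Real.exp (K * t) • (∫ u in Ioc (0:ℝ) t, g u)
        - ∫ u in Ioc (0:ℝ) t, Real.exp (K * u) • g u := by
        simp only [sub_smul]
        have h1 : IntegrableOn (fun u => Real.exp (K * t) • g u) (Ioc 0 t) volume := by
          exact hg.smul (Real.exp (K * t))
        rw [integral_sub h1 (smul_exp_integrableOn K t g hg), integral_smul]


/-- Let `m₁,…,m_N > 0` and let `V₁,…,V_N : [0,∞) → ℝ^d` be locally
absolutely continuous (expressed in integral form with locally integrable derivatives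
`G_i`) such that for a.e. `t ≥ 0` there exist coefficients `a_{ij}(t) ∈ [0,1]` with
`V_i'(t) = Σ_{j≠i} a_{ij}(t) m_j (V_j(t) − V_i(t))` for every `i`. Then the maximal
speed is nonincreasing: `max_i |V_i(t)| ≤ max_i |V_i(0)|` for all `t ≥ 0`. -/
theorem stmt4 {d : ℕ} (N : ℕ) (hN : 0 < N) (m : Fin N → ℝ) (hm : ∀ i, 0 < m i)
    (V G : Fin N → ℝ → E d)
    (hInt : ∀ i t, 0 ≤ t → IntervalIntegrable (G i) volume 0 t)
    (hV : ∀ i t, 0 ≤ t → V i t = V i 0 + ∫ s in (0:ℝ)..t, G i s)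
    (hG : ∀ᵐ t ∂(volume.restrict (Set.Ici (0:ℝ))), ∃ a : Fin N → Fin N → ℝ,
      (∀ i j, a i j ∈ Set.Icc (0:ℝ) 1) ∧
      ∀ i, G i t = ∑ j ∈ Finset.univ.erase i, (a i j * m j) • (V j t - V i t)) :
    ∀ t, 0 ≤ t →
      (Finset.univ.sup' ⟨⟨0, hN⟩, Finset.mem_univ _⟩ fun i => ‖V i t‖) ≤
        Finset.univ.sup' ⟨⟨0, hN⟩, Finset.mem_univ _⟩ fun i => ‖V i 0‖ := by
  intro T hT
  classical
  have ne0 : (Finset.univ : Finset (Fin N)).Nonempty := ⟨⟨0, hN⟩, Finset.mem_univ _⟩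
  set M : ℝ → ℝ := fun s => Finset.univ.sup' ne0 fun i => ‖V i s‖ with hM
  show M T ≤ M 0
  set K : ℝ := ∑ j, m j with hKdef
  have hK : 0 < K := Finset.sum_pos (fun i _ => hm i) ne0
  -- basic integrability / continuity facts
  have hGIoc : ∀ i x, 0 ≤ x → IntegrableOn (G i) (Ioc 0 x) := fun i x hx => (hInt i x hx).1
  have hGIcc : ∀ i x, 0 ≤ x → IntegrableOn (G i) (Icc 0 x) := fun i x hx => by
    rw [integrableOn_Icc_iff_integrableOn_Ioc]
    exact hGIoc i x hx
  have hVeq : ∀ i s, 0 ≤ s → V i s = V i 0 + ∫ u in Ioc (0:ℝ) s, G i u := fun i s hs => by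
    rw [hV i s hs, intervalIntegral.integral_of_le hs]
  have hVcont : ∀ i x, 0 ≤ x → ContinuousOn (V i) (Icc 0 x) := by
    intro i x hx
    have h1 : ContinuousOn (fun s => V i 0 + ∫ u in Ioc (0:ℝ) s, G i u) (Icc 0 x) :=
      continuousOn_const.add (intervalIntegral.continuousOn_primitive (hGIcc i x hx))
    exact h1.congr fun s hs => hVeq i s hs.1
  have hVleM : ∀ i s, ‖V i s‖ ≤ M s := fun i s => Finset.le_sup' (fun j => ‖V j s‖) (Finset.mem_univ i)
  have hMnn : ∀ s, 0 ≤ M s := fun s => (norm_nonneg (V ⟨0, hN⟩ s)).trans (hVleM _ s)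
  have hMcont : ContinuousOn M (Icc 0 T) :=
    ContinuousOn.finset_sup'_apply ne0 fun i _ => (hVcont i T hT).norm
  -- clamped max function, continuous on all of ℝ
  set c : ℝ → ℝ := fun s => min (max s 0) T with hc
  have hccont : Continuous c := ((continuous_id.max continuous_const).min continuous_const)
  have hcmem : ∀ s, c s ∈ Icc (0:ℝ) T := fun s => ⟨le_min (le_max_right s 0) hT, min_le_right _ _⟩
  set Mt : ℝ → ℝ := fun s => M (c s) with hMt
  have hMtcont : Continuous Mt := hMcont.comp_continuous hccont hcmem
  have hMteq : ∀ s ∈ Icc (0:ℝ) T, Mt s = M s := by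
    intro s hs
    have : c s = s := by
      rw [hc]; simp only [max_eq_left hs.1, min_eq_left hs.2]
    rw [hMt]; simp only [this]
  -- the a.e. differential bound
  have haebd : ∀ i, ∀ᵐ s ∂(volume.restrict (Set.Ici (0:ℝ))),
      ‖G i s + K • V i s‖ ≤ K * M s := by
    intro i
    filter_upwards [hG] with s hs
    obtain ⟨a, ha, hGs⟩ := hs
    set lam : ℝ := ∑ j ∈ Finset.univ.erase i, a i j * m j with hlam
    have hcnn : ∀ j, 0 ≤ a i j * m j := fun j => mul_nonneg (ha i j).1 (hm j).le
    have hlam0 : 0 ≤ lam := Finset.sum_nonneg fun j _ => hcnn j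
    have hlamK : lam ≤ K := by
      refine le_trans (Finset.sum_le_sum fun j _ => mul_le_of_le_one_left (hm j).le (ha i j).2) ?_
      exact Finset.sum_le_sum_of_subset_of_nonneg (Finset.erase_subset _ _)
        fun j _ _ => (hm j).le
    have hrw : G i s + K • V i s =
        (∑ j ∈ Finset.univ.erase i, (a i j * m j) • V j s) + (K - lam) • V i s := by
      rw [hGs i]
      have h1 : ∑ j ∈ Finset.univ.erase i, (a i j * m j) • (V j s - V i s)
          = (∑ j ∈ Finset.univ.erase i, (a i j * m j) • V j s) - lam • V i s := by
        rw [hlam, Finset.sum_smul, ← Finset.sum_sub_distrib]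
        exact Finset.sum_congr rfl fun j _ => smul_sub _ _ _
      rw [h1, sub_smul]
      abel
    rw [hrw]
    calc ‖(∑ j ∈ Finset.univ.erase i, (a i j * m j) • V j s) + (K - lam) • V i s‖
        ≤ ‖∑ j ∈ Finset.univ.erase i, (a i j * m j) • V j s‖ + ‖(K - lam) • V i s‖ :=
          norm_add_le _ _
      _ ≤ (∑ j ∈ Finset.univ.erase i, (a i j * m j) * M s) + (K - lam) * M s := by
          refine add_le_add ?_ ?_
          · refine (norm_sum_le _ _).trans (Finset.sum_le_sum fun j _ => ?_)
            rw [norm_smul, Real.norm_eq_abs, abs_of_nonneg (hcnn j)]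
            exact mul_le_mul_of_nonneg_left (hVleM j s) (hcnn j)
          · rw [norm_smul, Real.norm_eq_abs, abs_of_nonneg (sub_nonneg.2 hlamK)]
            exact mul_le_mul_of_nonneg_left (hVleM i s) (sub_nonneg.2 hlamK)
      _ = K * M s := by rw [← Finset.sum_mul, ← hlam]; ring
  -- Duhamel identity
  have idty : ∀ i, ∀ x, 0 ≤ x → x ≤ T →
      Real.exp (K * x) • V i x =
        V i 0 + ∫ s in Ioc (0:ℝ) x, Real.exp (K * s) • (G i s + K • V i s) := by
    intro i x hx0 hxT
    set W : ℝ → E d := fun s => ∫ u in Ioc (0:ℝ) s, G i u with hW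
    have hWcont : ContinuousOn W (Icc 0 x) := intervalIntegral.continuousOn_primitive (hGIcc i x hx0)
    have hVcx : ContinuousOn (V i) (Icc 0 x) := hVcont i x hx0
    have hexpc : Continuous fun s : ℝ => K * Real.exp (K * s) :=
      continuous_const.mul (Real.continuous_exp.comp (continuous_const.mul continuous_id))
    have hint1 : IntegrableOn (fun s => Real.exp (K * s) • G i s) (Ioc 0 x) :=
      smul_exp_integrableOn K x (G i) (hGIoc i x hx0)
    have hint2 : IntegrableOn (fun s => (K * Real.exp (K * s)) • V i s) (Ioc 0 x) :=
      ((hexpc.continuousOn.smul hVcx).integrableOn_Icc).mono_set Ioc_subset_Icc_self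
    have hint3 : IntegrableOn (fun s => (K * Real.exp (K * s)) • V i 0) (Ioc 0 x) :=
      (hexpc.integrableOn_Icc.mono_set Ioc_subset_Icc_self).smul_const _
    have hint4 : IntegrableOn (fun s => (K * Real.exp (K * s)) • W s) (Ioc 0 x) :=
      ((hexpc.continuousOn.smul hWcont).integrableOn_Icc).mono_set Ioc_subset_Icc_self
    have step1 : ∫ s in Ioc (0:ℝ) x, Real.exp (K * s) • (G i s + K • V i s)
        = (∫ s in Ioc (0:ℝ) x, Real.exp (K * s) • G i s)
          + ∫ s in Ioc (0:ℝ) x, (K * Real.exp (K * s)) • V i s := by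
      rw [← integral_add hint1 hint2]
      refine setIntegral_congr_fun measurableSet_Ioc fun s _ => ?_
      rw [smul_add, smul_smul, mul_comm (Real.exp (K * s)) K]
    have step2 : ∫ s in Ioc (0:ℝ) x, (K * Real.exp (K * s)) • V i s
        = (∫ s in Ioc (0:ℝ) x, (K * Real.exp (K * s)) • V i 0)
          + ∫ s in Ioc (0:ℝ) x, (K * Real.exp (K * s)) • W s := by
      rw [← integral_add hint3 hint4]
      refine setIntegral_congr_fun measurableSet_Ioc fun s hs => ?_
      rw [hVeq i s hs.1.le, smul_add]
    have step3 : ∫ s in Ioc (0:ℝ) x, (K * Real.exp (K * s)) • V i 0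
        = (Real.exp (K * x) - 1) • V i 0 := by
      rw [integral_smul_const, exp_setIntegral K 0 x hx0]
      norm_num
    have step4 : ∫ s in Ioc (0:ℝ) x, (K * Real.exp (K * s)) • W s
        = Real.exp (K * x) • W x - ∫ u in Ioc (0:ℝ) x, Real.exp (K * u) • G i u :=
      parts_lemma K x hx0 (G i) (hGIoc i x hx0)
    rw [step1, step2, step3, step4, hVeq i x hx0]
    rw [smul_add, sub_smul, one_smul]
    abel
  -- key integral inequality
  have key : ∀ x ∈ Icc (0:ℝ) T,
      Real.exp (K * x) * M x ≤ M 0 + ∫ s in Ioc (0:ℝ) x, K * Real.exp (K * s) * Mt s := by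
    intro x hx
    obtain ⟨i, _, hieq⟩ := Finset.exists_mem_eq_sup' ne0 fun i => ‖V i x‖
    rw [show M x = ‖V i x‖ from hieq]
    have hbd : ∀ᵐ s ∂(volume.restrict (Ioc (0:ℝ) x)),
        ‖Real.exp (K * s) • (G i s + K • V i s)‖ ≤ K * Real.exp (K * s) * Mt s := by
      filter_upwards [ae_restrict_of_ae_restrict_of_subset
        (show Ioc (0:ℝ) x ⊆ Ici 0 from fun u hu => hu.1.le) (haebd i),
        ae_restrict_mem measurableSet_Ioc] with s h1 h2
      rw [norm_smul, Real.norm_eq_abs, abs_of_pos (Real.exp_pos _)]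
      have hMs : Mt s = M s := hMteq s ⟨h2.1.le, h2.2.trans hx.2⟩
      rw [hMs]
      calc Real.exp (K * s) * ‖G i s + K • V i s‖
          ≤ Real.exp (K * s) * (K * M s) :=
            mul_le_mul_of_nonneg_left h1 (Real.exp_pos _).le
        _ = K * Real.exp (K * s) * M s := by ring
    have hfi : IntegrableOn (fun s => Real.exp (K * s) • (G i s + K • V i s)) (Ioc 0 x) := by
      refine smul_exp_integrableOn K x _ ?_
      refine (hGIoc i x hx.1).add ?_
      exact (((hVcont i x hx.1).const_smul K).integrableOn_Icc).mono_set Ioc_subset_Icc_self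
    have hgi : IntegrableOn (fun s => K * Real.exp (K * s) * Mt s) (Ioc 0 x) := by
      have : Continuous fun s => K * Real.exp (K * s) * Mt s := by
        exact ((continuous_const.mul (Real.continuous_exp.comp
          (continuous_const.mul continuous_id))).mul hMtcont)
      exact this.integrableOn_Icc.mono_set Ioc_subset_Icc_self
    calc Real.exp (K * x) * ‖V i x‖ = ‖Real.exp (K * x) • V i x‖ := by
          rw [norm_smul, Real.norm_eq_abs, abs_of_pos (Real.exp_pos _)]
      _ = ‖V i 0 + ∫ s in Ioc (0:ℝ) x, Real.exp (K * s) • (G i s + K • V i s)‖ := by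
          rw [idty i x hx.1 hx.2]
      _ ≤ ‖V i 0‖ + ‖∫ s in Ioc (0:ℝ) x, Real.exp (K * s) • (G i s + K • V i s)‖ :=
          norm_add_le _ _
      _ ≤ M 0 + ∫ s in Ioc (0:ℝ) x, ‖Real.exp (K * s) • (G i s + K • V i s)‖ :=
          add_le_add (hVleM i 0) (norm_integral_le_integral_norm _)
      _ ≤ M 0 + ∫ s in Ioc (0:ℝ) x, K * Real.exp (K * s) * Mt s :=
          add_le_add_right (integral_mono_ae hfi.norm hgi hbd) _
  -- Gronwall
  set ψ : ℝ → ℝ := fun x => M 0 + ∫ s in (0:ℝ)..x, K * Real.exp (K * s) * Mt s with hψ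
  have hcont2 : Continuous fun s => K * Real.exp (K * s) * Mt s :=
    ((continuous_const.mul (Real.continuous_exp.comp (continuous_const.mul continuous_id))).mul
      hMtcont)
  have hψd : ∀ x, HasDerivAt ψ (K * Real.exp (K * x) * Mt x) x := by
    intro x
    have := intervalIntegral.integral_hasDerivAt_right
      (hcont2.intervalIntegrable 0 x)
      (hcont2.stronglyMeasurableAtFilter volume (nhds x))
      hcont2.continuousAt
    exact this.const_add (M 0)
  have hψIoc : ∀ x, 0 ≤ x → ψ x = M 0 + ∫ s in Ioc (0:ℝ) x, K * Real.exp (K * s) * Mt s := by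
    intro x hx
    rw [hψ]
    simp only [intervalIntegral.integral_of_le hx]
  have bound : ∀ x ∈ Ico (0:ℝ) T, K * Real.exp (K * x) * Mt x ≤ K * ψ x + 0 := by
    intro x hx
    have h1 := key x ⟨hx.1, hx.2.le⟩
    rw [← hψIoc x hx.1] at h1
    rw [add_zero, hMteq x ⟨hx.1, hx.2.le⟩, mul_assoc]
    exact mul_le_mul_of_nonneg_left h1 hK.le
  have gr := le_gronwallBound_of_liminf_deriv_right_le (f := ψ)
    (f' := fun x => K * Real.exp (K * x) * Mt x) (δ := M 0) (K := K) (ε := 0) (a := 0) (b := T)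
    (fun x _ => (hψd x).continuousAt.continuousWithinAt)
    (fun x _ r hr => (hψd x).hasDerivWithinAt.liminf_right_slope_le hr)
    (by rw [hψ]; simp) bound
  have hψT : ψ T ≤ M 0 * Real.exp (K * T) := by
    have := gr T (right_mem_Icc.2 hT)
    rwa [sub_zero, gronwallBound_ε0] at this
  have hfin := key T (right_mem_Icc.2 hT)
  rw [← hψIoc T hT] at hfin
  have : Real.exp (K * T) * M T ≤ Real.exp (K * T) * M 0 := by
    calc Real.exp (K * T) * M T ≤ ψ T := hfin
      _ ≤ M 0 * Real.exp (K * T) := hψT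
      _ = Real.exp (K * T) * M 0 := mul_comm _ _
  exact le_of_mul_le_mul_left this (Real.exp_pos _)
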